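/- For every F ∈ ℝ^{2×2} and every rotation R ∈ SO(2), one has |√(FᵀF) − I| ≤ |F − R| in the Frobenius norm, where √(FᵀF) denotes the unique positive semidefinite symmetric square root of FᵀF. Consequently, |√(FᵀF) − I| ≤ dist(F, SO(2)). -/
import Mathlib


open Matrix

noncomputable section

abbrev M2 := Matrix (Fin 2) (Fin 2) ℝ

/-- Frobenius norm. -/
def frob (A : M2) : ℝ := Real.sqrt (∑ i, ∑ j, A i j ^ 2)

/-- Rotations. -/
def SO2 : Set M2 := {R | R.transpose * R = 1 ∧ R.det = 1}

/-- Frobenius distance to SO(2). -/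
def distSO2 (F : M2) : ℝ := sInf ((fun R => frob (F - R)) '' SO2)

private lemma aux_det_nonneg (p q r : ℝ) (hp0 : 0 ≤ p) (hr0 : 0 ≤ r)
    (hC : 0 ≤ r * (p * r - q * q)) (hD : 0 ≤ p * (p * r - q * q))
    (hE : 0 ≤ p + 2 * q + r) (hF' : 0 ≤ p - 2 * q + r) : 0 ≤ p * r - q * q := by
  by_contra h
  push_neg at h
  have hr1 : r = 0 := by
    have : r ≤ 0 := by nlinarith [hC]
    linarith
  have hp1 : p = 0 := by
    have : p ≤ 0 := by nlinarith [hD]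
    linarith
  have hq1 : q = 0 := by linarith
  rw [hp1, hr1, hq1] at h; norm_num at h

private lemma aux_dge (D E : ℝ) (h : D * D = E * E) (h0 : 0 ≤ D) : E ≤ D := by
  nlinarith [sq_nonneg (D + E), sq_nonneg (D - E)]

private lemma aux_ht2 (a b c d p q r : ℝ)
    (e1 : p * p + q * q = a * a + c * c) (e3 : q * q + r * r = b * b + d * d)
    (hdge : a * d - b * c ≤ p * r - q * q) :
    (a + d) ^ 2 + (c - b) ^ 2 ≤ (p + r) ^ 2 := by
  nlinarith [e1, e3, hdge]

private lemma aux_trace (a b c d x y p r : ℝ) (hxy : x * x + y * y = 1)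
    (h0 : 0 ≤ p + r) (h2 : (a + d) ^ 2 + (c - b) ^ 2 ≤ (p + r) ^ 2) :
    a * x + b * (-y) + c * y + d * x ≤ p + r := by
  have hu2 : (a * x + b * (-y) + c * y + d * x) ^ 2 ≤ (a + d) ^ 2 + (c - b) ^ 2 := by
    nlinarith [sq_nonneg ((a + d) * y - (c - b) * x), hxy, sq_nonneg (x * x + y * y)]
  nlinarith [sq_nonneg (p + r + (a * x + b * (-y) + c * y + d * x))]

private lemma aux_final (a b c d p q r x y : ℝ)
    (e1 : p * p + q * q = a * a + c * c) (e3 : q * q + r * r = b * b + d * d)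
    (hxy : x * x + y * y = 1)
    (hu : a * x + b * (-y) + c * y + d * x ≤ p + r) :
    (p - 1) ^ 2 + q ^ 2 + q ^ 2 + (r - 1) ^ 2 ≤
      (a - x) ^ 2 + (b - (-y)) ^ 2 + (c - y) ^ 2 + (d - x) ^ 2 := by
  nlinarith [e1, e3, hxy, hu]

/-- If `S` is the (unique) positive semidefinite symmetric square root of
`FᵀF`, then `|S − I| ≤ |F − R|` for every rotation `R ∈ SO(2)`, and consequently
`|S − I| ≤ dist(F, SO(2))` in the Frobenius norm. -/
theorem sqrt_strain_bound (F S : M2) (hSsym : S.transpose = S)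
    (hSpsd : ∀ v : Fin 2 → ℝ, 0 ≤ v ⬝ᵥ S.mulVec v)
    (hSsq : S * S = F.transpose * F) :
    (∀ R ∈ SO2, frob (S - 1) ≤ frob (F - R)) ∧ frob (S - 1) ≤ distSO2 F := by
  have hsym : S 1 0 = S 0 1 := by
    have := congrFun (congrFun hSsym 1) 0
    simpa [Matrix.transpose_apply] using this.symm
  -- equations from S*S = FᵀF
  have e1 : S 0 0 * S 0 0 + S 0 1 * S 0 1 = F 0 0 * F 0 0 + F 1 0 * F 1 0 := by
    have e := congrFun (congrFun hSsq 0) 0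
    simp [Matrix.mul_apply, Fin.sum_univ_two, hsym] at e
    linarith
  have e3 : S 0 1 * S 0 1 + S 1 1 * S 1 1 = F 0 1 * F 0 1 + F 1 1 * F 1 1 := by
    have e := congrFun (congrFun hSsq 1) 1
    simp [Matrix.mul_apply, Fin.sum_univ_two, hsym] at e
    linarith
  -- psd facts
  have hp0 : 0 ≤ S 0 0 := by
    have h := hSpsd ![1, 0]
    simpa [dotProduct, Matrix.mulVec, Fin.sum_univ_two] using h
  have hr0 : 0 ≤ S 1 1 := by
    have h := hSpsd ![0, 1]
    simpa [dotProduct, Matrix.mulVec, Fin.sum_univ_two] using h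
  have hC : 0 ≤ S 1 1 * (S 0 0 * S 1 1 - S 0 1 * S 0 1) := by
    have h := hSpsd ![S 1 1, -(S 0 1)]
    simp [dotProduct, Matrix.mulVec, Fin.sum_univ_two, hsym] at h
    nlinarith [h]
  have hD : 0 ≤ S 0 0 * (S 0 0 * S 1 1 - S 0 1 * S 0 1) := by
    have h := hSpsd ![S 0 1, -(S 0 0)]
    simp [dotProduct, Matrix.mulVec, Fin.sum_univ_two, hsym] at h
    nlinarith [h]
  have hE : 0 ≤ S 0 0 + 2 * S 0 1 + S 1 1 := by
    have h := hSpsd ![1, 1]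
    simp [dotProduct, Matrix.mulVec, Fin.sum_univ_two, hsym] at h
    nlinarith [h]
  have hF' : 0 ≤ S 0 0 - 2 * S 0 1 + S 1 1 := by
    have h := hSpsd ![1, -1]
    simp [dotProduct, Matrix.mulVec, Fin.sum_univ_two, hsym] at h
    nlinarith [h]
  have hdetS : 0 ≤ S 0 0 * S 1 1 - S 0 1 * S 0 1 :=
    aux_det_nonneg _ _ _ hp0 hr0 hC hD hE hF'
  have hdd : (S 0 0 * S 1 1 - S 0 1 * S 0 1) * (S 0 0 * S 1 1 - S 0 1 * S 0 1)
      = (F 0 0 * F 1 1 - F 0 1 * F 1 0) * (F 0 0 * F 1 1 - F 0 1 * F 1 0) := by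
    have e := congrArg Matrix.det hSsq
    rw [Matrix.det_mul, Matrix.det_mul, Matrix.det_transpose] at e
    rw [Matrix.det_fin_two, Matrix.det_fin_two] at e
    rw [hsym] at e
    linear_combination e
  have hdge : F 0 0 * F 1 1 - F 0 1 * F 1 0 ≤ S 0 0 * S 1 1 - S 0 1 * S 0 1 :=
    aux_dge _ _ hdd hdetS
  have ht0 : 0 ≤ S 0 0 + S 1 1 := by linarith
  have ht2 : (F 0 0 + F 1 1) ^ 2 + (F 1 0 - F 0 1) ^ 2 ≤ (S 0 0 + S 1 1) ^ 2 :=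
    aux_ht2 _ _ _ _ _ _ _ e1 e3 hdge
  have key : ∀ R ∈ SO2, frob (S - 1) ≤ frob (F - R) := by
    intro R hR
    obtain ⟨hort, hdet⟩ := hR
    have o1 : R 0 0 * R 0 0 + R 1 0 * R 1 0 = 1 := by
      have e := congrFun (congrFun hort 0) 0
      simp [Matrix.mul_apply, Fin.sum_univ_two, Matrix.one_apply] at e
      linarith
    have o2 : R 0 0 * R 0 1 + R 1 0 * R 1 1 = 0 := by
      have e := congrFun (congrFun hort 0) 1
      simp [Matrix.mul_apply, Fin.sum_univ_two, Matrix.one_apply] at e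
      linarith
    have o3 : R 0 1 * R 0 1 + R 1 1 * R 1 1 = 1 := by
      have e := congrFun (congrFun hort 1) 1
      simp [Matrix.mul_apply, Fin.sum_univ_two, Matrix.one_apply] at e
      linarith
    have od : R 0 0 * R 1 1 - R 0 1 * R 1 0 = 1 := by
      have e := hdet
      rw [Matrix.det_fin_two] at e
      linarith
    have h01 : R 0 1 = -(R 1 0) := by
      linear_combination R 1 1 * o2 - R 0 1 * od - R 1 0 * o3
    have h11 : R 1 1 = R 0 0 := by
      linear_combination R 0 0 * o3 - R 0 1 * o2 - R 1 1 * od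
    have hu : F 0 0 * R 0 0 + F 0 1 * (-(R 1 0)) + F 1 0 * R 1 0 + F 1 1 * R 0 0
        ≤ S 0 0 + S 1 1 :=
      aux_trace _ _ _ _ _ _ _ _ o1 ht0 ht2
    unfold frob
    apply Real.sqrt_le_sqrt
    simp only [Fin.sum_univ_two, Matrix.sub_apply, Matrix.one_apply_eq,
      Matrix.one_apply_ne, Matrix.one_apply, hsym, h01, h11]
    norm_num
    have := aux_final (F 0 0) (F 0 1) (F 1 0) (F 1 1) (S 0 0) (S 0 1) (S 1 1)
      (R 0 0) (R 1 0) e1 e3 o1 hu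
    linarith
  refine ⟨key, ?_⟩
  apply le_csInf
  · exact ⟨frob (F - 1), ⟨1, ⟨by simp, by simp⟩, rfl⟩⟩
  · rintro z ⟨R, hR, rfl⟩
    exact key R hR
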